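/- arXiv:2309.07239 — 2 statements merged into one kernel-verified Lean document; each statement's English description precedes it below -/
import Mathlib

section
/- Strong membership in an internal set is equivalent to invertibility of the distance to the complement: let (A_ε)_{ε∈(0,1]} be a family of subsets of ℝ^n whose complements are nonempty, and let (x_ε) be a moderate net of points of ℝ^n. Say that (x_ε) belongs strongly to (A_ε) if x_ε ∈ A_ε eventually and, for every moderate net (y_ε) with (x_ε − y_ε) negligible, also y_ε ∈ A_ε eventually. Then (x_ε) belongs strongly to (A_ε) if and only if there exists r ∈ ℝ such that dist(x_ε, ℝ^n∖A_ε) ≥ ε^r eventually (equivalently, the class of the net (dist(x_ε, ℝ^n∖A_ε)) is invertible in ℝ̃). -/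
open Set

/-!
STATEMENT 16: Strong membership in an internal set is equivalent to invertibility of the
distance to the complement: for a family `(A_ε)` of subsets of `ℝ^n` with nonempty complements
and a moderate net `(x_ε)`, the net `(x_ε)` belongs strongly to `(A_ε)` (i.e. `x_ε ∈ A_ε`
eventually and the same holds for every equivalent moderate net) if and only if there exists
`r ∈ ℝ` such that `dist(x_ε, ℝ^n ∖ A_ε) ≥ ε^r` eventually.
-/

/-- A property `P` of `ε` holds *eventually* if it holds for all `ε` in some interval `(0, η]`
with `η ∈ (0,1]`. -/
def Ev (P : ℝ → Prop) : Prop :=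
  ∃ η : ℝ, 0 < η ∧ η ≤ 1 ∧ ∀ ε : ℝ, 0 < ε → ε ≤ η → P ε

/-- A net of points of `ℝ^n` is *moderate* if `‖x ε‖ ≤ ε^(-N)` eventually, for some `N`. -/
def ModerateV {n : ℕ} (x : ℝ → EuclideanSpace ℝ (Fin n)) : Prop :=
  ∃ N : ℕ, Ev fun ε => ‖x ε‖ ≤ (ε ^ N)⁻¹

/-- A net of points of `ℝ^n` is *negligible* if `‖x ε‖ ≤ ε^q` eventually, for every `q`. -/
def NegligibleV {n : ℕ} (x : ℝ → EuclideanSpace ℝ (Fin n)) : Prop :=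
  ∀ q : ℕ, Ev fun ε => ‖x ε‖ ≤ ε ^ q

/-- `(x_ε)` belongs *strongly* to the net of sets `(A_ε)`: `x_ε ∈ A_ε` eventually, and the
same holds for every moderate net equivalent to `(x_ε)` modulo negligible nets. -/
def StrongMem {n : ℕ} (A : ℝ → Set (EuclideanSpace ℝ (Fin n)))
    (x : ℝ → EuclideanSpace ℝ (Fin n)) : Prop :=
  (Ev fun ε => x ε ∈ A ε) ∧
  ∀ y : ℝ → EuclideanSpace ℝ (Fin n), ModerateV y →
    NegligibleV (fun ε => x ε - y ε) → Ev fun ε => y ε ∈ A ε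

/-- Auxiliary: recursively choose a sequence `e k` with `e 0 ≤ 1`, halving at each step,
and each `e k` satisfying `Q k`. -/
lemma seq_aux {Q : ℕ → ℝ → Prop}
    (H : ∀ k : ℕ, ∀ η : ℝ, 0 < η → ∃ ε : ℝ, 0 < ε ∧ ε ≤ η ∧ Q k ε) :
    ∃ e : ℕ → ℝ, (∀ k, 0 < e k) ∧ e 0 ≤ 1 ∧ (∀ k, e (k + 1) ≤ e k / 2) ∧ ∀ k, Q k (e k) := by
  choose F h1 h2 h3 using H
  let g : ℕ → {ε : ℝ // 0 < ε} := fun k =>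
    Nat.rec ⟨F 0 1 one_pos, h1 0 1 one_pos⟩
      (fun k p => ⟨F (k + 1) (p.1 / 2) (half_pos p.2), h1 _ _ _⟩) k
  refine ⟨fun k => (g k).1, fun k => (g k).2, h2 0 1 one_pos, fun k => h2 (k + 1) _ _,
    fun k => ?_⟩
  cases k with
  | zero => exact h3 0 1 one_pos
  | succ k => exact h3 (k + 1) _ _

theorem strongMem_iff_infDist_invertible (n : ℕ)
    (A : ℝ → Set (EuclideanSpace ℝ (Fin n)))
    (hA : ∀ ε ∈ Ioc (0:ℝ) 1, ((A ε)ᶜ).Nonempty)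
    (x : ℝ → EuclideanSpace ℝ (Fin n)) (hx : ModerateV x) :
    StrongMem A x ↔ ∃ r : ℝ, Ev fun ε => ε ^ r ≤ Metric.infDist (x ε) (A ε)ᶜ := by
  classical
  constructor
  · rintro ⟨hmem, hstrong⟩
    by_contra hno
    push_neg at hno
    have hfreq : ∀ k : ℕ, ∀ η : ℝ, 0 < η → ∃ ε : ℝ, 0 < ε ∧ ε ≤ η ∧
        (ε ≤ 1 ∧ Metric.infDist (x ε) (A ε)ᶜ < ε ^ k) := by
      intro k η hη
      have h := hno (k : ℝ)
      simp only [Ev] at h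
      push_neg at h
      obtain ⟨ε, hε1, hε2, hε3⟩ := h (min η 1) (by positivity) (min_le_right _ _)
      refine ⟨ε, hε1, hε2.trans (min_le_left _ _), hε2.trans (min_le_right _ _), ?_⟩
      rwa [← Real.rpow_natCast ε k]
    obtain ⟨e, hepos, he0, hehalf, heQ⟩ := seq_aux hfreq
    have hanti : StrictAnti e := strictAnti_nat_of_succ_lt fun k =>
      lt_of_le_of_lt (hehalf k) (by linarith [hepos k])
    have he1 : ∀ k, e k ≤ 1 := fun k => (hanti.antitone (Nat.zero_le k)).trans he0
    have hepow : ∀ k, e k ≤ (1 / 2) ^ k := by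
      intro k
      induction k with
      | zero => simpa using he0
      | succ k ih =>
        calc e (k + 1) ≤ e k / 2 := hehalf k
          _ ≤ (1 / 2) ^ k / 2 := by linarith
          _ = (1 / 2) ^ (k + 1) := by ring
    have hz : ∀ k : ℕ, ∃ zk, zk ∈ (A (e k))ᶜ ∧ dist (x (e k)) zk < (e k) ^ k := by
      intro k
      have hne := hA (e k) ⟨hepos k, he1 k⟩
      exact (Metric.infDist_lt_iff hne).mp (heQ k).2
    choose z hz1 hz2 using hz
    set y : ℝ → EuclideanSpace ℝ (Fin n) :=
      fun ε => if h : ∃ k, ε = e k then z h.choose else x ε with hy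
    have hy_mem : ∀ k, y (e k) ∈ (A (e k))ᶜ := by
      intro k
      have h : ∃ j, e k = e j := ⟨k, rfl⟩
      simp only [hy]
      rw [dif_pos h]
      have hs : (A (e k))ᶜ = (A (e h.choose))ᶜ :=
        congrArg compl (congrArg A h.choose_spec)
      rw [hs]
      exact hz1 _
    have hneg : NegligibleV (fun ε => x ε - y ε) := by
      intro q
      refine ⟨e (q + 1), hepos _, he1 _, fun ε hε hεle => ?_⟩
      simp only [hy]
      by_cases h : ∃ k, ε = e k
      · rw [dif_pos h]
        set j := h.choose with hj
        have hs : ε = e j := h.choose_spec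
        have hjq : q + 1 ≤ j := by
          by_contra hlt
          push_neg at hlt
          have := hanti hlt
          rw [← hs] at this
          linarith
        have hd : ‖x ε - z j‖ = dist (x (e j)) (z j) := by
          rw [← hs, dist_eq_norm]
        calc ‖x ε - z j‖ ≤ (e j) ^ j := by rw [hd]; exact (hz2 j).le
          _ = ε ^ j := by rw [hs]
          _ ≤ ε ^ q := pow_le_pow_of_le_one hε.le (hs ▸ he1 j) (by omega)
      · rw [dif_neg h]
        simp only [sub_self, norm_zero]
        positivity
    have hmod : ModerateV y := by
      obtain ⟨N, η1, hη1pos, hη1le, hxb⟩ := hx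
      obtain ⟨η2, hη2pos, hη2le, hnb⟩ := hneg 0
      refine ⟨N + 1, min (min η1 η2) (1 / 2), by positivity,
        ((min_le_left _ _).trans (min_le_left _ _)).trans hη1le, fun ε hε hεle => ?_⟩
      have hεle1 : ε ≤ η1 := hεle.trans ((min_le_left _ _).trans (min_le_left _ _))
      have hεle2 : ε ≤ η2 := hεle.trans ((min_le_left _ _).trans (min_le_right _ _))
      have hεhalf : ε ≤ 1 / 2 := hεle.trans (min_le_right _ _)
      have hb1 : ‖x ε‖ ≤ (ε ^ N)⁻¹ := hxb ε hε hεle1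
      have hb2 : ‖x ε - y ε‖ ≤ 1 := by simpa using hnb ε hε hεle2
      have hyn : ‖y ε‖ ≤ ‖x ε‖ + ‖x ε - y ε‖ := by
        simpa [sub_sub_cancel] using norm_sub_le (x ε) (x ε - y ε)
      have h1le : (1 : ℝ) ≤ (ε ^ N)⁻¹ := by
        rw [le_inv_comm₀ one_pos (by positivity)]
        simpa using pow_le_one₀ hε.le (by linarith : ε ≤ 1)
      have hinv : (ε ^ N)⁻¹ * 2 ≤ (ε ^ (N + 1))⁻¹ := by
        rw [pow_succ, mul_inv]
        have h2 : (2 : ℝ) ≤ ε⁻¹ := by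
          rw [← one_div, le_div_iff₀ hε]
          linarith
        have : (0 : ℝ) < (ε ^ N)⁻¹ := by positivity
        nlinarith
      linarith
    obtain ⟨η, hηpos, hηle, hmemy⟩ := hstrong y hmod hneg
    obtain ⟨k, hk⟩ := exists_pow_lt_of_lt_one hηpos (by norm_num : (1 : ℝ) / 2 < 1)
    exact hy_mem k (hmemy (e k) (hepos k) (((hepow k).trans hk.le)))
  · rintro ⟨r, η, hηpos, hηle, hbd⟩
    constructor
    · refine ⟨η, hηpos, hηle, fun ε hε hεle => ?_⟩
      by_contra hmemc
      have h0 : Metric.infDist (x ε) (A ε)ᶜ = 0 := Metric.infDist_zero_of_mem hmemc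
      have h1 : ε ^ r ≤ Metric.infDist (x ε) (A ε)ᶜ := hbd ε hε hεle
      have hpos : 0 < ε ^ r := Real.rpow_pos_of_pos hε r
      rw [h0] at h1
      linarith
    · intro y hymod hyneg
      obtain ⟨η2, hη2pos, hη2le, hnb⟩ := hyneg (⌈r⌉₊ + 1)
      refine ⟨min (min η η2) (1 / 2), by positivity,
        ((min_le_left _ _).trans (min_le_left _ _)).trans hηle, fun ε hε hεle => ?_⟩
      have hεle1 : ε ≤ η := hεle.trans ((min_le_left _ _).trans (min_le_left _ _))
      have hεle2 : ε ≤ η2 := hεle.trans ((min_le_left _ _).trans (min_le_right _ _))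
      have hεhalf : ε ≤ 1 / 2 := hεle.trans (min_le_right _ _)
      by_contra hc
      have hinf : Metric.infDist (x ε) (A ε)ᶜ ≤ dist (x ε) (y ε) :=
        Metric.infDist_le_dist_of_mem hc
      have hd : dist (x ε) (y ε) ≤ ε ^ (⌈r⌉₊ + 1) := by
        rw [dist_eq_norm]; exact hnb ε hε hεle2
      have hlt : ε ^ ((⌈r⌉₊ : ℝ) + 1) < ε ^ r := by
        apply Real.rpow_lt_rpow_of_exponent_gt hε (by linarith)
        have := Nat.le_ceil r
        linarith
      have heq : ε ^ ((⌈r⌉₊ : ℝ) + 1) = ε ^ (⌈r⌉₊ + 1) := by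
        rw [← Real.rpow_natCast ε (⌈r⌉₊ + 1)]
        push_cast
        ring_nf
      have hbr : ε ^ r ≤ Metric.infDist (x ε) (A ε)ᶜ := hbd ε hε hεle1
      rw [heq] at hlt
      linarith
end

section
/- Strong internal sets are open in the sharp topology: let (A_ε)_{ε∈(0,1]} be a family of subsets of ℝ^n with nonempty complements and let ⟨A_ε⟩ denote the set of generalized points of ℝ̃^n having a representative (x_ε) that belongs strongly to (A_ε) (i.e. x_ε ∈ A_ε eventually and every equivalent representative lies in A_ε eventually). Then for every x ∈ ⟨A_ε⟩ there exists r ∈ ℝ such that every generalized point y with ‖y − x‖ < e^{−r} also lies in ⟨A_ε⟩; hence ⟨A_ε⟩ is open for the ultrametric D(x,y)=‖x−y‖. -/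
open Set
open scoped Classical

noncomputable section

/-- The set whose supremum is the valuation `V x`. -/
def VsetV {n : ℕ} (x : ℝ → EuclideanSpace ℝ (Fin n)) : Set ℝ :=
  {r : ℝ | Ev fun ε => ‖x ε‖ ≤ ε ^ r}

/-- The sharp norm `‖x‖ = e^{-V x}`, with value `0` when `V x = ∞`. -/
noncomputable def vnormV {n : ℕ} (x : ℝ → EuclideanSpace ℝ (Fin n)) : ℝ :=
  if BddAbove (VsetV x) then Real.exp (-sSup (VsetV x)) else 0

/-- Combining two eventual properties. -/
lemma EvAnd {P Q : ℝ → Prop} (hP : Ev P) (hQ : Ev Q) : Ev fun ε => P ε ∧ Q ε := by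
  obtain ⟨a, ha0, ha1, hA⟩ := hP
  obtain ⟨b, hb0, hb1, hB⟩ := hQ
  exact ⟨min a b, lt_min ha0 hb0, le_trans (min_le_left a b) ha1, fun ε hε hε' =>
    ⟨hA ε hε (le_trans hε' (min_le_left a b)), hB ε hε (le_trans hε' (min_le_right a b))⟩⟩

/-- Monotonicity of eventual properties (we also may use `ε ≤ 1`). -/
lemma EvMono {P Q : ℝ → Prop} (h : Ev P) (himp : ∀ ε, 0 < ε → ε ≤ 1 → P ε → Q ε) : Ev Q := by
  obtain ⟨η, h0, h1, hall⟩ := h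
  exact ⟨η, h0, h1, fun ε hε hε' => himp ε hε (le_trans hε' h1) (hall ε hε hε')⟩

/-- Key claim: if `x` belongs strongly to `A`, then for some `m` the ball of radius `ε^m`
around `x ε` is eventually contained in `A ε`. -/
lemma keyClaim {n : ℕ} (A : ℝ → Set (EuclideanSpace ℝ (Fin n)))
    (x : ℝ → EuclideanSpace ℝ (Fin n)) (hxm : ModerateV x) (hx : StrongMem A x) :
    ∃ m : ℕ, Ev fun ε => ∀ z, ‖x ε - z‖ ≤ ε ^ m → z ∈ A ε := by
  by_contra hcon
  push_neg at hcon
  have step : ∀ (m : ℕ) (η : ℝ), 0 < η → ∃ p : ℝ × EuclideanSpace ℝ (Fin n),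
      0 < p.1 ∧ p.1 ≤ η ∧ p.1 ≤ 1/(m+1) ∧ ‖x p.1 - p.2‖ ≤ p.1 ^ m ∧ p.2 ∉ A p.1 := by
    intro m η hη
    have h1 : ¬ Ev fun ε => ∀ z, ‖x ε - z‖ ≤ ε ^ m → z ∈ A ε := hcon m
    rw [Ev] at h1
    push_neg at h1
    have hη'0 : 0 < min η (min (1/(m+1:ℝ)) 1) := lt_min hη (lt_min (by positivity) one_pos)
    have hη'1 : min η (min (1/(m+1:ℝ)) 1) ≤ 1 := le_trans (min_le_right _ _) (min_le_right _ _)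
    obtain ⟨ε, hε0, hεle, z, hz1, hz2⟩ := h1 _ hη'0 hη'1
    exact ⟨(ε, z), hε0, le_trans hεle (min_le_left _ _),
      le_trans hεle (le_trans (min_le_right _ _) (min_le_left _ _)), hz1, hz2⟩
  set W : ℕ → ℝ → ℝ × EuclideanSpace ℝ (Fin n) := fun m η =>
    if h : 0 < η then Classical.choose (step m η h) else (1, 0) with hWdef
  have hW : ∀ m η (h : 0 < η), 0 < (W m η).1 ∧ (W m η).1 ≤ η ∧ (W m η).1 ≤ 1/(m+1) ∧
      ‖x (W m η).1 - (W m η).2‖ ≤ (W m η).1 ^ m ∧ (W m η).2 ∉ A (W m η).1 := by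
    intro m η h
    simp only [hWdef, dif_pos h]
    exact Classical.choose_spec (step m η h)
  set g : ℕ → ℝ × EuclideanSpace ℝ (Fin n) :=
    fun m => Nat.rec (W 0 1) (fun k ih => W (k+1) (ih.1/2)) m with hgdef
  have hg0 : g 0 = W 0 1 := rfl
  have hgs : ∀ m, g (m+1) = W (m+1) ((g m).1 / 2) := fun m => rfl
  have hgpos : ∀ m, 0 < (g m).1 := by
    intro m; induction m with
    | zero => rw [hg0]; exact (hW 0 1 one_pos).1
    | succ k ih => rw [hgs]; exact (hW _ _ (half_pos ih)).1
  have hspec : ∀ m, (g m).1 ≤ 1/(m+1) ∧ ‖x (g m).1 - (g m).2‖ ≤ (g m).1 ^ m ∧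
      (g m).2 ∉ A (g m).1 := by
    intro m; cases m with
    | zero =>
      have h := hW 0 1 one_pos
      rw [hg0]; exact ⟨h.2.2.1, h.2.2.2⟩
    | succ k =>
      have h := hW (k+1) ((g k).1/2) (half_pos (hgpos k))
      rw [hgs]; exact ⟨h.2.2.1, h.2.2.2⟩
  have hdec : ∀ k, (g (k+1)).1 < (g k).1 := by
    intro k
    have h := (hW (k+1) ((g k).1/2) (half_pos (hgpos k))).2.1
    rw [hgs]
    exact lt_of_le_of_lt h (half_lt_self (hgpos k))
  have hanti : StrictAnti fun m => (g m).1 := strictAnti_nat_of_succ_lt hdec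
  set y : ℝ → EuclideanSpace ℝ (Fin n) :=
    fun ε => if h : ∃ m, (g m).1 = ε then (g (Nat.find h)).2 else x ε with hydef
  -- Bound on the difference
  have hdiff : ∀ ε, 0 < ε → ε ≤ 1 → ∀ q : ℕ, ε ≤ (g q).1 → ‖x ε - y ε‖ ≤ ε ^ q := by
    intro ε hε0 hε1 q hεq
    by_cases h : ∃ m, (g m).1 = ε
    · have hfind := Nat.find_spec h
      have hqk : q ≤ Nat.find h := by
        by_contra hlt
        push_neg at hlt
        have := hanti hlt
        simp only at this
        rw [hfind] at this
        exact absurd (lt_of_lt_of_le this hεq) (lt_irrefl _)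
      have hb : ‖x ε - y ε‖ ≤ ε ^ (Nat.find h) := by
        rw [hydef]
        simp only [dif_pos h]
        have := (hspec (Nat.find h)).2.1
        rw [hfind] at this
        exact this
      exact le_trans hb (pow_le_pow_of_le_one hε0.le hε1 hqk)
    · rw [hydef]
      simp only [dif_neg h, sub_self, norm_zero]
      positivity
  -- y is moderate
  obtain ⟨N, ηx, hηx0, hηx1, hxb⟩ := hxm
  have hymod : ModerateV y := by
    refine ⟨N+1, min ηx (min (1/2) (g 0).1), lt_min hηx0 (lt_min (by norm_num) (hgpos 0)),
      le_trans (min_le_left _ _) hηx1, ?_⟩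
    intro ε hε0 hε
    have hε1 : ε ≤ 1 := le_trans (le_trans hε (le_trans (min_le_right _ _) (min_le_left _ _)))
      (by norm_num)
    have hd : ‖x ε - y ε‖ ≤ 1 := by
      have := hdiff ε hε0 hε1 0 (le_trans hε (le_trans (min_le_right _ _) (min_le_right _ _)))
      simpa using this
    have hxε : ‖x ε‖ ≤ (ε ^ N)⁻¹ := hxb ε hε0 (le_trans hε (min_le_left _ _))
    have hyε : ‖y ε‖ ≤ ‖x ε‖ + ‖x ε - y ε‖ := by
      calc ‖y ε‖ = ‖x ε - (x ε - y ε)‖ := by rw [sub_sub_cancel]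
        _ ≤ ‖x ε‖ + ‖x ε - y ε‖ := norm_sub_le _ _
    have hεhalf : ε ≤ 1/2 := le_trans hε (le_trans (min_le_right _ _) (min_le_left _ _))
    have hpowpos : 0 < ε ^ N := pow_pos hε0 N
    have hone : (1:ℝ) ≤ (ε ^ N)⁻¹ := by
      rw [le_inv_comm₀ one_pos hpowpos]
      simpa using pow_le_one₀ hε0.le hε1
    have h2 : ‖y ε‖ ≤ 2 * (ε ^ N)⁻¹ := by linarith
    have h3 : 2 * (ε ^ N)⁻¹ ≤ (ε ^ (N+1))⁻¹ := by
      rw [pow_succ, mul_inv]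
      have hinv : (2:ℝ) ≤ ε⁻¹ := by
        rw [le_inv_comm₀ (by norm_num) hε0]
        linarith
      have : 2 * (ε ^ N)⁻¹ ≤ ε⁻¹ * (ε ^ N)⁻¹ := by
        apply mul_le_mul_of_nonneg_right hinv (by positivity)
      linarith [this]
    linarith
  -- x - y is negligible
  have hyneg : NegligibleV (fun ε => x ε - y ε) := by
    intro q
    refine ⟨(g q).1, hgpos q, le_trans (hspec q).1 (by
      rw [div_le_one (by positivity)]; push_cast; linarith), ?_⟩
    intro ε hε0 hε
    have hε1 : ε ≤ 1 := le_trans hε (le_trans (hspec q).1 (by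
      rw [div_le_one (by positivity)]; push_cast; linarith))
    exact hdiff ε hε0 hε1 q hε
  -- contradiction with strong membership
  obtain ⟨η, hη0, hη1, hmem⟩ := hx.2 y hymod hyneg
  obtain ⟨M, hM⟩ := exists_nat_one_div_lt hη0
  have hle : (g M).1 ≤ η := le_trans (hspec M).1 hM.le
  have hmemM : y (g M).1 ∈ A (g M).1 := hmem (g M).1 (hgpos M) hle
  have hex : ∃ m, (g m).1 = (g M).1 := ⟨M, rfl⟩
  have hyval : y (g M).1 = (g (Nat.find hex)).2 := by
    rw [hydef]; simp only [dif_pos hex]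
  have hfs : (g (Nat.find hex)).1 = (g M).1 := Nat.find_spec hex
  have hnot : (g (Nat.find hex)).2 ∉ A (g (Nat.find hex)).1 := (hspec (Nat.find hex)).2.2
  rw [hfs] at hnot
  rw [hyval] at hmemM
  exact hnot hmemM

theorem strong_internal_set_open (n : ℕ)
    (A : ℝ → Set (EuclideanSpace ℝ (Fin n)))
    (hA : ∀ ε ∈ Ioc (0:ℝ) 1, ((A ε)ᶜ).Nonempty) :
    ∀ x : ℝ → EuclideanSpace ℝ (Fin n), ModerateV x → StrongMem A x →
      ∃ r : ℝ, ∀ y : ℝ → EuclideanSpace ℝ (Fin n), ModerateV y →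
        vnormV (fun ε => y ε - x ε) < Real.exp (-r) → StrongMem A y := by
  intro x hxm hx
  obtain ⟨m, hm⟩ := keyClaim A x hxm hx
  refine ⟨(m : ℝ) + 1, ?_⟩
  intro y hym hv
  have hs : ∃ s ∈ VsetV (fun ε => y ε - x ε), ((m:ℝ)+1) ≤ s := by
    by_cases hb : BddAbove (VsetV (fun ε => y ε - x ε))
    · rw [vnormV, if_pos hb] at hv
      have h1 : (m:ℝ)+1 < sSup (VsetV fun ε => y ε - x ε) := by
        have := Real.exp_lt_exp.mp hv; linarith
      have hne : (VsetV fun ε => y ε - x ε).Nonempty := by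
        by_contra hne
        rw [Set.not_nonempty_iff_eq_empty] at hne
        rw [hne, Real.sSup_empty] at h1
        have h0 : (0:ℝ) ≤ (m:ℝ) := by positivity
        linarith
      obtain ⟨s, hsm, hss⟩ := exists_lt_of_lt_csSup hne h1
      exact ⟨s, hsm, hss.le⟩
    · obtain ⟨s, hsm, hss⟩ := not_bddAbove_iff.mp hb ((m:ℝ)+1)
      exact ⟨s, hsm, hss.le⟩
  obtain ⟨s, hsmem, hsge⟩ := hs
  have hsmem' : Ev fun ε => ‖y ε - x ε‖ ≤ ε ^ s := hsmem
  have hEv : Ev fun ε => ‖y ε - x ε‖ ≤ ε ^ (m+1 : ℕ) := by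
    refine EvMono hsmem' fun ε hε0 hε1 hp => ?_
    calc ‖y ε - x ε‖ ≤ ε ^ s := hp
      _ ≤ ε ^ (((m+1:ℕ)):ℝ) := by
          apply Real.rpow_le_rpow_of_exponent_ge hε0 hε1
          push_cast; linarith
      _ = ε ^ (m+1:ℕ) := Real.rpow_natCast ε (m+1)
  constructor
  · refine EvMono (EvAnd hm hEv) fun ε hε0 hε1 hp => ?_
    refine hp.1 (y ε) ?_
    rw [norm_sub_rev]
    exact le_trans hp.2 (pow_le_pow_of_le_one hε0.le hε1 (Nat.le_succ m))
  · intro z hzm hneg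
    have hnq := hneg (m+1)
    have hhalf : Ev fun ε => ε ≤ 1/2 := ⟨1/2, by norm_num, by norm_num, fun ε _ h => h⟩
    refine EvMono (EvAnd (EvAnd hm hEv) (EvAnd hnq hhalf)) fun ε hε0 hε1 hp => ?_
    obtain ⟨⟨h1, h2⟩, h3, h4⟩ := hp
    refine h1 (z ε) ?_
    have htri : ‖x ε - z ε‖ ≤ ‖y ε - x ε‖ + ‖y ε - z ε‖ := by
      have heq : x ε - z ε = -(y ε - x ε) + (y ε - z ε) := by abel
      rw [heq]
      calc ‖-(y ε - x ε) + (y ε - z ε)‖ ≤ ‖-(y ε - x ε)‖ + ‖y ε - z ε‖ := norm_add_le _ _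
        _ = ‖y ε - x ε‖ + ‖y ε - z ε‖ := by rw [norm_neg]
    have hpow : ε ^ (m+1) = ε ^ m * ε := pow_succ ε m
    have hmnn : (0:ℝ) ≤ ε ^ m := by positivity
    nlinarith [hmnn, h2, h3, htri, h4]
end
end
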